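/- Let χ be a Dirichlet character of conductor f, N ≥ 1, S_m = Σ_{a=1}^{f} χ(a) a^m, and define T_r(k) = (-N!)^r · Σ_{i_1+⋯+i_r = k, i_j ≥ 1} 1/((N+i_1)!···(N+i_r)!) with T_0(0) = 1 and T_0(k) = 0 for k ≥ 1. Then for n ≥ 1: B_{N,n,χ} = Σ_{k=0}^{n} (k!/f^{N-k}) · binomial(n,k) · Σ_{r=0}^{k} T_r(k) · S_{n-k}. -/

import Mathlib

open PowerSeries Finset

noncomputable def eSer (c : ℂ) : PowerSeries ℂ := PowerSeries.mk fun n => c ^ n / n.factorial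

noncomputable def dSer (N f : ℕ) : PowerSeries ℂ :=
  PowerSeries.mk fun m => (N.factorial : ℂ) * (f : ℂ) ^ m / (N + m).factorial

noncomputable def hB (N n : ℕ) : ℂ :=
  n.factorial * PowerSeries.coeff n (dSer N 1)⁻¹

noncomputable def hBP (N n : ℕ) (x : ℂ) : ℂ :=
  n.factorial * PowerSeries.coeff n (eSer x * (dSer N 1)⁻¹)

noncomputable def gBP (N f : ℕ) (χ : DirichletCharacter ℂ f) (n : ℕ) (x : ℂ) : ℂ :=
  n.factorial * PowerSeries.coeff n
    (((f : ℂ) ^ N)⁻¹ • ((∑ a ∈ Finset.Icc 1 f, (PowerSeries.C (χ (a : ZMod f))) * eSer (x + a)) * (dSer N f)⁻¹))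

noncomputable def gB (N f : ℕ) (χ : DirichletCharacter ℂ f) (n : ℕ) : ℂ := gBP N f χ n 0

lemma coeff_pow_tuple (r n : ℕ) (φ : PowerSeries ℂ) :
    PowerSeries.coeff n (φ ^ r) =
      ∑ i ∈ Finset.Nat.antidiagonalTuple r n, ∏ j, PowerSeries.coeff (i j) φ := by
  have h : φ ^ r = ∏ _j : Fin r, φ := by simp
  rw [h, PowerSeries.coeff_prod]
  apply Finset.sum_nbij' (fun l => (Finsupp.equivFunOnFinite l : Fin r → ℕ))
    (fun x => Finsupp.equivFunOnFinite.symm x)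
  · intro l hl
    rw [Finset.mem_finsuppAntidiag] at hl
    rw [Finset.Nat.mem_antidiagonalTuple, ← hl.1]
    rfl
  · intro x hx
    rw [Finset.Nat.mem_antidiagonalTuple] at hx
    rw [Finset.mem_finsuppAntidiag]
    refine ⟨?_, by simp⟩
    rw [← hx]; simp [Finsupp.equivFunOnFinite]; rfl
  · intro l _; simp
  · intro x _; simp
  · intro l _; rfl

lemma coeff_inv_one_sub (u : PowerSeries ℂ) (hu : constantCoeff u = 0) (n : ℕ) :
    PowerSeries.coeff n (1 - u)⁻¹ = ∑ r ∈ Finset.range (n + 1), PowerSeries.coeff n (u ^ r) := by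
  have hunit : constantCoeff (1 - u) ≠ 0 := by simp [hu]
  have hgeo : (1 - u) * ∑ r ∈ Finset.range (n + 1), u ^ r = 1 - u ^ (n + 1) := by
    have := geom_sum_mul u (n + 1)
    linear_combination -this
  have key : (1 - u)⁻¹ = (∑ r ∈ Finset.range (n + 1), u ^ r) + (1 - u)⁻¹ * u ^ (n + 1) := by
    have hinv : (1 - u)⁻¹ * (1 - u) = 1 := PowerSeries.inv_mul_cancel _ hunit
    calc (1 - u)⁻¹ = (1 - u)⁻¹ * ((1 - u) * ∑ r ∈ Finset.range (n + 1), u ^ r + u ^ (n + 1)) := by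
          rw [hgeo]; ring_nf
      _ = _ := by rw [mul_add, ← mul_assoc, hinv, one_mul]
  rw [key, map_add, map_sum]
  have hX : (X : PowerSeries ℂ) ^ (n + 1) ∣ (1 - u)⁻¹ * u ^ (n + 1) := by
    exact Dvd.dvd.mul_left (pow_dvd_pow_of_dvd (PowerSeries.X_dvd_iff.mpr hu) _) _
  have := (PowerSeries.X_pow_dvd_iff.mp hX) n (by omega)
  rw [this, add_zero]

noncomputable def Taux (N k : ℕ) : ℂ :=
  ∑ r ∈ Finset.range (k + 1),
    ((-(N.factorial : ℂ)) ^ r *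
      ∑ i ∈ (Finset.Nat.antidiagonalTuple r k).filter (fun i => ∀ j, 1 ≤ i j),
        ∏ j, ((N + i j).factorial : ℂ)⁻¹)

lemma coeff_dSer_inv (N f k : ℕ) :
    PowerSeries.coeff k (dSer N f)⁻¹ = (f : ℂ) ^ k * Taux N k := by
  rw [Taux]
  set u : PowerSeries ℂ := 1 - dSer N f with hu_def
  have hcu : constantCoeff u = 0 := by
    simp [hu_def, dSer, ← PowerSeries.coeff_zero_eq_constantCoeff, PowerSeries.coeff_mk]
    rw [div_self (by exact_mod_cast N.factorial_ne_zero : (N.factorial:ℂ) ≠ 0), sub_self]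
  have hcoeffu : ∀ m : ℕ, 1 ≤ m →
      PowerSeries.coeff m u = -(N.factorial : ℂ) * ((f : ℂ) ^ m * ((N + m).factorial : ℂ)⁻¹) := by
    intro m hm
    have : PowerSeries.coeff m (1 : PowerSeries ℂ) = 0 := by
      rw [PowerSeries.coeff_one]; simp; omega
    simp [hu_def, dSer, PowerSeries.coeff_mk, this, div_eq_mul_inv]
    ring
  have hd : dSer N f = 1 - u := by rw [hu_def]; ring
  rw [hd, coeff_inv_one_sub u hcu, Finset.mul_sum]
  refine Finset.sum_congr rfl fun r _ => ?_
  rw [coeff_pow_tuple]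
  have hfil : (∑ i ∈ (Finset.Nat.antidiagonalTuple r k).filter (fun i => ∀ j, 1 ≤ i j),
      ∏ j, PowerSeries.coeff (i j) u)
      = ∑ i ∈ Finset.Nat.antidiagonalTuple r k, ∏ j, PowerSeries.coeff (i j) u := by
    apply Finset.sum_filter_of_ne
    intro i hi hne j
    by_contra h
    push_neg at h
    interval_cases h' : i j
    apply hne
    refine Finset.prod_eq_zero (Finset.mem_univ j) ?_
    rw [h']
    simpa [hu_def, dSer, ← PowerSeries.coeff_zero_eq_constantCoeff] using hcu
  rw [← hfil]
  rw [Finset.mul_sum, Finset.mul_sum]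
  refine Finset.sum_congr rfl fun i hi => ?_
  rw [Finset.mem_filter, Finset.Nat.mem_antidiagonalTuple] at hi
  have : ∀ j, PowerSeries.coeff (i j) u
      = -(N.factorial : ℂ) * ((f : ℂ) ^ (i j) * ((N + i j).factorial : ℂ)⁻¹) :=
    fun j => hcoeffu _ (hi.2 j)
  rw [Finset.prod_congr rfl (fun j _ => this j), Finset.prod_mul_distrib,
    Finset.prod_mul_distrib, Finset.prod_const, Finset.prod_pow_eq_pow_sum, hi.1]
  simp [Finset.card_univ]
  ring

lemma coeff_eSer_mul (x : ℂ) (ψ : PowerSeries ℂ) (n : ℕ) :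
    PowerSeries.coeff n (eSer x * ψ) =
      ∑ k ∈ Finset.range (n + 1), x ^ (n - k) / ((n - k).factorial : ℂ) * PowerSeries.coeff k ψ := by
  rw [PowerSeries.coeff_mul, ← Finset.HasAntidiagonal.map_swap_antidiagonal, Finset.sum_map]
  simp only [Function.Embedding.coeFn_mk, Prod.fst_swap, Prod.snd_swap]
  rw [Finset.Nat.sum_antidiagonal_eq_sum_range_succ
    (f := fun k l => PowerSeries.coeff l (eSer x) * PowerSeries.coeff k ψ)]
  exact Finset.sum_congr rfl fun k _ => by simp [eSer, PowerSeries.coeff_mk]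

theorem stmt14 (N f : ℕ) (hN : 1 ≤ N) (hf : 0 < f) (χ : DirichletCharacter ℂ f)
    (hχ : χ.IsPrimitive) (n : ℕ) (hn : 1 ≤ n) :
    gB N f χ n = ∑ k ∈ Finset.range (n + 1),
      (k.factorial : ℂ) / (f : ℂ) ^ ((N : ℤ) - (k : ℤ)) * (n.choose k : ℂ) *
      (∑ r ∈ Finset.range (k + 1),
        ((-(N.factorial : ℂ)) ^ r *
          ∑ i ∈ (Finset.Nat.antidiagonalTuple r k).filter (fun i => ∀ j, 1 ≤ i j),
            ∏ j, ((N + i j).factorial : ℂ)⁻¹)) *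
      (∑ a ∈ Finset.Icc 1 f, χ (a : ZMod f) * (a : ℂ) ^ (n - k)) := by
  have hf' : (f : ℂ) ≠ 0 := Nat.cast_ne_zero.mpr hf.ne'
  have hrhs : ∀ k, (∑ r ∈ Finset.range (k + 1),
        ((-(N.factorial : ℂ)) ^ r *
          ∑ i ∈ (Finset.Nat.antidiagonalTuple r k).filter (fun i => ∀ j, 1 ≤ i j),
            ∏ j, ((N + i j).factorial : ℂ)⁻¹)) = Taux N k := fun k => rfl
  simp_rw [hrhs]
  unfold gB gBP
  rw [map_smul, smul_eq_mul, Finset.sum_mul, map_sum]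
  simp_rw [mul_assoc, PowerSeries.coeff_C_mul, zero_add, coeff_eSer_mul, coeff_dSer_inv]
  rw [Finset.mul_sum, Finset.mul_sum]
  rw [show (∑ a ∈ Finset.Icc 1 f, (n.factorial : ℂ) * (((f : ℂ) ^ N)⁻¹ *
        (χ (a : ZMod f) * ∑ k ∈ Finset.range (n + 1),
          (a : ℂ) ^ (n - k) / ((n - k).factorial : ℂ) * ((f : ℂ) ^ k * Taux N k))))
      = ∑ a ∈ Finset.Icc 1 f, ∑ k ∈ Finset.range (n + 1),
          (n.factorial : ℂ) * (((f : ℂ) ^ N)⁻¹ * (χ (a : ZMod f) *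
            ((a : ℂ) ^ (n - k) / ((n - k).factorial : ℂ) * ((f : ℂ) ^ k * Taux N k)))) from
    Finset.sum_congr rfl fun a _ => by rw [Finset.mul_sum, Finset.mul_sum, Finset.mul_sum]]
  rw [Finset.sum_comm]
  refine Finset.sum_congr rfl fun k hk => ?_
  rw [Finset.mem_range] at hk
  have hkn : k ≤ n := by omega
  rw [Finset.mul_sum, Finset.mul_sum, Finset.mul_sum]
  refine Finset.sum_congr rfl fun a _ => ?_
  have hfacteq : (n.choose k : ℂ) * (k.factorial : ℂ) * ((n - k).factorial : ℂ)
      = (n.factorial : ℂ) := by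
    exact_mod_cast congrArg (Nat.cast : ℕ → ℂ) (Nat.choose_mul_factorial_mul_factorial hkn)
  rw [zpow_sub₀ hf', zpow_natCast, zpow_natCast]
  have hnk : ((n - k).factorial : ℂ) ≠ 0 := by exact_mod_cast (n - k).factorial_ne_zero
  have hfN : ((f : ℂ)) ^ N ≠ 0 := pow_ne_zero _ hf'
  field_simp
  linear_combination (-(χ (a : ZMod f) * (a : ℂ) ^ (n - k) * Taux N k)) * hfacteq
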